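/- For each n ≥ 1, the convex hull of all roots of the root system of type A_n (realized as the vectors e_i + e_{i+1} + ... + e_j and their negatives in R^n, for 1 ≤ i ≤ j ≤ n) has normalized (integral) volume C(2n, n). -/
import Mathlib

open MeasureTheory

open Finset

/-- The interval root `e_i + e_{i+1} + ⋯ + e_j` of type `Aₙ`, as a vector in `ℝⁿ`. -/
def intervalRoot (n : ℕ) (i j : Fin n) : Fin n → ℝ :=
  fun k => if i ≤ k ∧ k ≤ j then 1 else 0


def USet (m : ℕ) (s t : ℝ) : Set (Fin m → ℝ) :=
  {u | (∑ k, max (u k) 0) ≤ s ∧ (∑ k, max (-u k) 0) ≤ t}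


def Mmat (n : ℕ) : Matrix (Fin n) (Fin n) ℝ :=
  fun i j => (if i = j then 1 else 0) - (if (j:ℕ)+1 = (i:ℕ) then 1 else 0)

noncomputable def Tmap (n : ℕ) : (Fin n → ℝ) →ₗ[ℝ] (Fin n → ℝ) := Matrix.toLin' (Mmat n)

lemma Mmat_det (n : ℕ) : (Mmat n).det = 1 := by
  rw [Matrix.det_of_lowerTriangular (Mmat n)]
  · apply Finset.prod_eq_one
    intro i _
    simp only [Mmat, if_pos rfl]
    rw [if_neg (show ¬((i:ℕ)+1 = (i:ℕ)) by omega)]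
    norm_num
  · intro i j hij
    simp only [OrderDual.toDual_lt_toDual] at hij
    simp only [Mmat]
    rw [if_neg (fun h => absurd h.symm (ne_of_lt hij).symm), if_neg (by omega)]
    ring

lemma Tmap_det (n : ℕ) : LinearMap.det (Tmap n) = 1 := by
  rw [Tmap, LinearMap.det_toLin', Mmat_det]

lemma Tmap_apply (n : ℕ) (x : Fin n → ℝ) (i : Fin n) :
    Tmap n x i = x i - (if h : 0 < (i:ℕ) then x ⟨(i:ℕ)-1, by omega⟩ else 0) := by
  have : Tmap n x i = ∑ j, Mmat n i j * x j := by
    simp [Tmap, Matrix.toLin'_apply, Matrix.mulVec, dotProduct]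
  rw [this]
  simp only [Mmat, sub_mul, one_mul, zero_mul]
  rw [Finset.sum_sub_distrib]
  congr 1
  · simp only [ite_mul, one_mul, zero_mul]
    rw [Finset.sum_ite_eq (Finset.univ : Finset (Fin n)) i (fun j => x j)]
    simp
  · by_cases h : 0 < (i:ℕ)
    · rw [dif_pos h]
      rw [Finset.sum_eq_single (⟨(i:ℕ)-1, by omega⟩ : Fin n)]
      · rw [if_pos (by simp; omega)]; ring
      · intro j _ hj
        rw [if_neg (fun hc => hj (by apply Fin.ext; simp at hc ⊢; omega))]
        ring
      · intro h'; exact absurd (Finset.mem_univ _) h'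
    · rw [dif_neg h]
      apply Finset.sum_eq_zero
      intro j _
      rw [if_neg (by omega)]
      ring

lemma convex_USet (m : ℕ) (s t : ℝ) : Convex ℝ (USet m s t) := by
  intro u hu v hv a b ha hb hab
  obtain ⟨hu1, hu2⟩ := hu
  obtain ⟨hv1, hv2⟩ := hv
  have key : ∀ (p q : Fin m → ℝ) (c : ℝ), (∑ k, max (p k) 0) ≤ c → (∑ k, max (q k) 0) ≤ c →
      (∑ k, max (a * p k + b * q k) 0) ≤ c := by
    intro p q c hp hq
    have h1 : (∑ k, max (a * p k + b * q k) 0) ≤ ∑ k, (a * max (p k) 0 + b * max (q k) 0) := by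
      apply Finset.sum_le_sum
      intro k _
      apply max_le
      · exact add_le_add (mul_le_mul_of_nonneg_left (le_max_left _ _) ha)
          (mul_le_mul_of_nonneg_left (le_max_left _ _) hb)
      · positivity
    have hc : 0 ≤ c := le_trans (Finset.sum_nonneg fun k _ => le_max_right _ _) hp
    calc (∑ k, max (a * p k + b * q k) 0)
        ≤ ∑ k, (a * max (p k) 0 + b * max (q k) 0) := h1
      _ = a * (∑ k, max (p k) 0) + b * (∑ k, max (q k) 0) := by
          rw [Finset.sum_add_distrib, Finset.mul_sum, Finset.mul_sum]
      _ ≤ a * c + b * c := add_le_add (mul_le_mul_of_nonneg_left hp ha)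
          (mul_le_mul_of_nonneg_left hq hb)
      _ = c := by rw [← add_mul, hab, one_mul]
  constructor
  · have h := key u v s hu1 hv1
    have e : (∑ k, max ((a • u + b • v) k) 0) = ∑ k, max (a * u k + b * v k) 0 := by
      apply Finset.sum_congr rfl
      intro k _
      congr 1
    rw [e]
    exact h
  · have h := key (fun k => -u k) (fun k => -v k) t (by simpa using hu2) (by simpa using hv2)
    have e : (∑ k, max (-((a • u + b • v) k)) 0) = ∑ k, max (a * (-u k) + b * (-v k)) 0 := by
      apply Finset.sum_congr rfl
      intro k _
      congr 1
      simp [smul_eq_mul]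
      ring
    rw [e]
    exact h

lemma pos_part_root (n : ℕ) (i j k : Fin n) (hij : i ≤ j) :
    max (Tmap n (intervalRoot n i j) k) 0 = if k = i then 1 else 0 := by
  rw [Tmap_apply]
  rw [Fin.le_def] at hij
  simp only [intervalRoot, Fin.le_def, Fin.ext_iff]
  by_cases h0 : 0 < (k:ℕ)
  · rw [dif_pos h0]
    split_ifs <;> (try (exfalso; omega)) <;> norm_num
  · rw [dif_neg h0]
    split_ifs <;> (try (exfalso; omega)) <;> norm_num

lemma neg_part_root (n : ℕ) (i j k : Fin n) (hij : i ≤ j) :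
    max (-(Tmap n (intervalRoot n i j) k)) 0 = if (k:ℕ) = (j:ℕ)+1 then 1 else 0 := by
  rw [Tmap_apply]
  rw [Fin.le_def] at hij
  simp only [intervalRoot, Fin.le_def, Fin.ext_iff]
  by_cases h0 : 0 < (k:ℕ)
  · rw [dif_pos h0]
    split_ifs <;> (try (exfalso; omega)) <;> norm_num
  · rw [dif_neg h0]
    split_ifs <;> (try (exfalso; omega)) <;> norm_num

lemma sum_ite_val (n : ℕ) (c : ℕ) :
    (∑ k : Fin n, if (k:ℕ) = c then (1:ℝ) else 0) = if c < n then 1 else 0 := by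
  by_cases h : c < n
  · rw [if_pos h, Finset.sum_eq_single (⟨c, h⟩ : Fin n)]
    · simp
    · intro b _ hb
      rw [if_neg (fun hc => hb (by apply Fin.ext; simpa using hc))]
    · intro h'; exact absurd (Finset.mem_univ _) h'
  · rw [if_neg h]
    apply Finset.sum_eq_zero
    intro k _
    rw [if_neg (by omega)]

lemma root_mem_USet (n : ℕ) (i j : Fin n) (hij : i ≤ j) :
    Tmap n (intervalRoot n i j) ∈ USet n 1 1 := by
  constructor
  · have : (∑ k, max (Tmap n (intervalRoot n i j) k) 0) = ∑ k : Fin n, if (k:ℕ) = (i:ℕ) then (1:ℝ) else 0 := by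
      apply Finset.sum_congr rfl
      intro k _
      rw [pos_part_root n i j k hij]
      simp [Fin.ext_iff]
    rw [this, sum_ite_val]
    split_ifs <;> norm_num
  · have : (∑ k, max (-(Tmap n (intervalRoot n i j) k)) 0) = ∑ k : Fin n, if (k:ℕ) = (j:ℕ)+1 then (1:ℝ) else 0 := by
      apply Finset.sum_congr rfl
      intro k _
      rw [neg_part_root n i j k hij]
    rw [this, sum_ite_val]
    split_ifs <;> norm_num

lemma neg_mem_USet (m : ℕ) (u : Fin m → ℝ) (h : u ∈ USet m 1 1) : -u ∈ USet m 1 1 := by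
  obtain ⟨h1, h2⟩ := h
  constructor
  · simpa using h2
  · simpa using h1

lemma hull_subset (n : ℕ) :
    convexHull ℝ {v : Fin n → ℝ | ∃ i j : Fin n, i ≤ j ∧
        (v = intervalRoot n i j ∨ v = -intervalRoot n i j)} ⊆ Tmap n ⁻¹' USet n 1 1 := by
  apply convexHull_min
  · rintro v ⟨i, j, hij, hv | hv⟩
    · rw [hv]
      exact root_mem_USet n i j hij
    · rw [hv]
      simp only [Set.mem_preimage, map_neg]
      exact neg_mem_USet n _ (root_mem_USet n i j hij)
  · exact (convex_USet n 1 1).linear_preimage (Tmap n)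

/-- extended coordinates -/
def Xe (n : ℕ) (x : Fin n → ℝ) (k : ℕ) : ℝ := if h : k < n then x ⟨k, h⟩ else 0

/-- increments of the extended path -/
noncomputable def Dv (n : ℕ) (x : Fin n → ℝ) (k : ℕ) : ℝ :=
  Xe n x k - (if k = 0 then 0 else Xe n x (k-1))

lemma Dv_eq_T (n : ℕ) (x : Fin n → ℝ) (k : Fin n) : Dv n x (k:ℕ) = Tmap n x k := by
  rw [Tmap_apply]
  unfold Dv Xe
  rw [dif_pos k.2]
  have e1 : x ⟨(k:ℕ), k.2⟩ = x k := congrArg x (Fin.eta k k.2)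
  rw [e1]
  congr 1
  by_cases h : (k:ℕ) = 0
  · rw [if_pos h, dif_neg (by omega)]
  · rw [if_neg h, dif_pos (by omega : 0 < (k:ℕ)), dif_pos (show (k:ℕ)-1 < n by have := k.2; omega)]

lemma Dv_sum (n : ℕ) (x : Fin n → ℝ) (j : ℕ) :
    ∑ k ∈ range (j+1), Dv n x k = Xe n x j := by
  induction j with
  | zero => simp [Dv]
  | succ j ih =>
    rw [Finset.sum_range_succ, ih]
    unfold Dv
    rw [if_neg (by omega)]
    simp

/-- the root at `0` -/
def r0 (n : ℕ) (hn : 0 < n) : Fin n → ℝ := intervalRoot n ⟨0, hn⟩ ⟨0, hn⟩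

/-- the signed root attached to a pair of indices -/
noncomputable def zz (n : ℕ) (hn : 0 < n) (a b : Fin (n+1)) : Fin n → ℝ :=
  if hab : (a:ℕ) < (b:ℕ) then
    intervalRoot n ⟨(a:ℕ), by have := b.2; omega⟩ ⟨(b:ℕ)-1, by have := b.2; omega⟩
  else if hba : (b:ℕ) < (a:ℕ) then
    -intervalRoot n ⟨(b:ℕ), by have := a.2; omega⟩ ⟨(a:ℕ)-1, by have := a.2; omega⟩
  else r0 n hn

lemma zz_mem (n : ℕ) (hn : 0 < n) (a b : Fin (n+1)) :
    zz n hn a b ∈ {v : Fin n → ℝ | ∃ i j : Fin n, i ≤ j ∧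
      (v = intervalRoot n i j ∨ v = -intervalRoot n i j)} := by
  unfold zz
  split_ifs with h1 h2
  · exact ⟨_, _, by rw [Fin.le_def]; simp; omega, Or.inl rfl⟩
  · exact ⟨_, _, by rw [Fin.le_def]; simp; omega, Or.inr rfl⟩
  · exact ⟨_, _, le_refl _, Or.inl rfl⟩

lemma r0_mem (n : ℕ) (hn : 0 < n) :
    r0 n hn ∈ {v : Fin n → ℝ | ∃ i j : Fin n, i ≤ j ∧
      (v = intervalRoot n i j ∨ v = -intervalRoot n i j)} :=
  ⟨_, _, le_refl _, Or.inl rfl⟩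

lemma neg_r0_mem (n : ℕ) (hn : 0 < n) :
    -r0 n hn ∈ {v : Fin n → ℝ | ∃ i j : Fin n, i ≤ j ∧
      (v = intervalRoot n i j ∨ v = -intervalRoot n i j)} :=
  ⟨_, _, le_refl _, Or.inr rfl⟩

lemma zz_apply (n : ℕ) (hn : 0 < n) (a b : Fin (n+1)) (hab : (a:ℕ) ≠ (b:ℕ)) (k : Fin n) :
    zz n hn a b k = (if (a:ℕ) ≤ (k:ℕ) then 1 else 0) - (if (b:ℕ) ≤ (k:ℕ) then 1 else 0) := by
  unfold zz
  rcases lt_or_gt_of_ne hab with h | h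
  · rw [dif_pos h]
    simp only [intervalRoot, Fin.le_def]
    split_ifs <;> (try (exfalso; omega)) <;> norm_num
  · rw [dif_neg (by omega), dif_pos h]
    simp only [Pi.neg_apply, intervalRoot, Fin.le_def]
    split_ifs <;> (try (exfalso; omega)) <;> norm_num

lemma region_subset (n : ℕ) (hn : 0 < n) :
    Tmap n ⁻¹' USet n 1 1 ⊆ convexHull ℝ {v : Fin n → ℝ | ∃ i j : Fin n, i ≤ j ∧
      (v = intervalRoot n i j ∨ v = -intervalRoot n i j)} := by
  set S := {v : Fin n → ℝ | ∃ i j : Fin n, i ≤ j ∧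
      (v = intervalRoot n i j ∨ v = -intervalRoot n i j)} with hS
  intro x hx
  obtain ⟨hA, hB⟩ := hx
  -- convert to range sums over Dv
  have hconvA : (∑ k : Fin n, max (Tmap n x k) 0) = ∑ k ∈ range n, max (Dv n x k) 0 := by
    rw [← Fin.sum_univ_eq_sum_range (fun k => max (Dv n x k) 0) n]
    exact Finset.sum_congr rfl fun k _ => by rw [Dv_eq_T]
  have hconvB : (∑ k : Fin n, max (-(Tmap n x k)) 0) = ∑ k ∈ range n, max (-(Dv n x k)) 0 := by
    rw [← Fin.sum_univ_eq_sum_range (fun k => max (-(Dv n x k)) 0) n]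
    exact Finset.sum_congr rfl fun k _ => by rw [Dv_eq_T]
  rw [hconvA] at hA
  rw [hconvB] at hB
  set V := ∑ k ∈ range (n+1), max (Dv n x k) 0 with hVdef
  set W := ∑ k ∈ range (n+1), max (-(Dv n x k)) 0 with hWdef
  have hXn : Xe n x n = 0 := by unfold Xe; rw [dif_neg (lt_irrefl n)]
  have hVW : V = W := by
    have : V - W = ∑ k ∈ range (n+1), (max (Dv n x k) 0 - max (-(Dv n x k)) 0) := by
      rw [Finset.sum_sub_distrib]
    rw [show (∑ k ∈ range (n+1), (max (Dv n x k) 0 - max (-(Dv n x k)) 0))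
        = ∑ k ∈ range (n+1), Dv n x k from
      Finset.sum_congr rfl fun k _ => max_zero_sub_max_neg_zero_eq_self _] at this
    rw [Dv_sum, hXn] at this
    linarith
  have hV0 : 0 ≤ V := Finset.sum_nonneg fun k _ => le_max_right _ _
  have hV1 : V ≤ 1 := by
    rcases le_total (Dv n x n) 0 with h | h
    · have : V = (∑ k ∈ range n, max (Dv n x k) 0) + max (Dv n x n) 0 := Finset.sum_range_succ _ n
      rw [this, max_eq_right h]
      linarith
    · have : W = (∑ k ∈ range n, max (-(Dv n x k)) 0) + max (-(Dv n x n)) 0 := Finset.sum_range_succ _ n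
      rw [hVW, this, max_eq_right (by linarith : -(Dv n x n) ≤ 0)]
      linarith
  rcases eq_or_lt_of_le hV0 with hV | hV
  · -- V = 0, so x = 0
    have hallP : ∀ k ∈ range (n+1), max (Dv n x k) 0 = 0 :=
      (Finset.sum_eq_zero_iff_of_nonneg (fun k _ => le_max_right _ _)).1 hV.symm
    have hallN : ∀ k ∈ range (n+1), max (-(Dv n x k)) 0 = 0 :=
      (Finset.sum_eq_zero_iff_of_nonneg (fun k _ => le_max_right _ _)).1 (by rw [← hWdef, ← hVW]; exact hV.symm)
    have hD0 : ∀ k ∈ range (n+1), Dv n x k = 0 := by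
      intro k hk
      have h1 := hallP k hk
      have h2 := hallN k hk
      have := max_zero_sub_max_neg_zero_eq_self (Dv n x k)
      rw [h1, h2] at this
      linarith
    have hx0 : x = 0 := by
      funext i
      have : Xe n x (i:ℕ) = 0 := by
        rw [← Dv_sum]
        apply Finset.sum_eq_zero
        intro k hk
        exact hD0 k (by rw [Finset.mem_range] at hk ⊢; have := i.2; omega)
      unfold Xe at this
      rw [dif_pos i.2] at this
      rwa [show (⟨(i:ℕ), i.2⟩ : Fin n) = i from Fin.eta i i.2] at this
    rw [hx0]
    have hseg := segment_subset_convexHull (𝕜 := ℝ) (r0_mem n hn) (neg_r0_mem n hn)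
    apply hseg
    refine ⟨(1/2 : ℝ), (1/2 : ℝ), by norm_num, by norm_num, by norm_num, ?_⟩
    rw [smul_neg]
    exact add_neg_cancel _
  · -- V > 0 : explicit convex combination
    set P : Fin (n+1) → ℝ := fun a => max (Dv n x (a:ℕ)) 0 with hP
    set N : Fin (n+1) → ℝ := fun a => max (-(Dv n x (a:ℕ))) 0 with hN
    have hSP : ∑ a : Fin (n+1), P a = V := Fin.sum_univ_eq_sum_range (fun k => max (Dv n x k) 0) (n+1)
    have hSN : ∑ a : Fin (n+1), N a = V := by
      rw [hVW]
      exact Fin.sum_univ_eq_sum_range (fun k => max (-(Dv n x k)) 0) (n+1)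
    have hPN0 : ∀ a : Fin (n+1), P a * N a = 0 := by
      intro a
      rcases le_total (Dv n x (a:ℕ)) 0 with h | h
      · rw [hP]; simp only; rw [max_eq_right h, zero_mul]
      · rw [hN]; simp only; rw [max_eq_right (by linarith : -(Dv n x (a:ℕ)) ≤ 0), mul_zero]
    set w : (Fin (n+1) × Fin (n+1)) ⊕ Bool → ℝ :=
      Sum.elim (fun ab => P ab.1 * N ab.2 / V) (fun _ => (1 - V)/2) with hw
    set z : (Fin (n+1) × Fin (n+1)) ⊕ Bool → (Fin n → ℝ) :=
      Sum.elim (fun ab => zz n hn ab.1 ab.2) (fun b => if b then r0 n hn else -r0 n hn) with hz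
    have hw0 : ∀ i ∈ (univ : Finset ((Fin (n+1) × Fin (n+1)) ⊕ Bool)), 0 ≤ w i := by
      rintro (⟨a, b⟩ | b) _
      · exact div_nonneg (mul_nonneg (le_max_right _ _) (le_max_right _ _)) hV0
      · simp only [hw, Sum.elim_inr]
        linarith
    have hzS : ∀ i ∈ (univ : Finset ((Fin (n+1) × Fin (n+1)) ⊕ Bool)), z i ∈ S := by
      rintro (⟨a, b⟩ | b) _
      · exact zz_mem n hn a b
      · cases b
        · show (if false = true then r0 n hn else -r0 n hn) ∈ S
          rw [if_neg (by simp)]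
          exact neg_r0_mem n hn
        · show (if true = true then r0 n hn else -r0 n hn) ∈ S
          rw [if_pos rfl]
          exact r0_mem n hn
    have hwsum : ∑ i, w i = 1 := by
      rw [Fintype.sum_sum_type]
      have h1 : (∑ ab : Fin (n+1) × Fin (n+1), w (Sum.inl ab)) = V := by
        simp only [hw, Sum.elim_inl]
        rw [show (∑ ab : Fin (n+1) × Fin (n+1), P ab.1 * N ab.2 / V)
            = (∑ ab : Fin (n+1) × Fin (n+1), P ab.1 * N ab.2) / V from (Finset.sum_div _ _ _).symm]
        rw [Fintype.sum_prod_type, ← Fintype.sum_mul_sum, hSP, hSN]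
        field_simp
      have h2 : (∑ b : Bool, w (Sum.inr b)) = 1 - V := by
        simp only [hw, Sum.elim_inr, Fintype.sum_bool]
        ring
      rw [h1, h2]
      ring
    have hcomb : ∑ i, w i • z i = x := by
      funext k
      rw [Finset.sum_apply]
      rw [Fintype.sum_sum_type]
      have hinr : (∑ b : Bool, (w (Sum.inr b) • z (Sum.inr b)) k) = 0 := by
        rw [Fintype.sum_bool]
        simp only [hw, hz, Sum.elim_inr, if_true, Bool.false_eq_true, if_false,
          Pi.smul_apply, smul_eq_mul, Pi.neg_apply]
        ring
      have hinl : (∑ ab : Fin (n+1) × Fin (n+1), (w (Sum.inl ab) • z (Sum.inl ab)) k)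
          = (∑ a : Fin (n+1), P a * (if (a:ℕ) ≤ (k:ℕ) then 1 else 0))
            - (∑ a : Fin (n+1), N a * (if (a:ℕ) ≤ (k:ℕ) then 1 else 0)) := by
        have step1 : (∑ ab : Fin (n+1) × Fin (n+1), (w (Sum.inl ab) • z (Sum.inl ab)) k)
            = ∑ ab : Fin (n+1) × Fin (n+1), (P ab.1 * N ab.2 / V) *
              ((if (ab.1:ℕ) ≤ (k:ℕ) then 1 else 0) - (if (ab.2:ℕ) ≤ (k:ℕ) then 1 else 0)) := by
          apply Finset.sum_congr rfl
          rintro ⟨a, b⟩ _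
          simp only [hw, hz, Sum.elim_inl, Pi.smul_apply, smul_eq_mul]
          by_cases hab : (a:ℕ) = (b:ℕ)
          · have hw0' : P a * N b = 0 := by
              have : N b = N a := by rw [hN]; simp only; rw [hab]
              rw [this]
              exact hPN0 a
            rw [hw0']
            simp [hab]
          · rw [zz_apply n hn a b hab k]
        rw [step1]
        have step2 : (∑ ab : Fin (n+1) × Fin (n+1), (P ab.1 * N ab.2 / V) *
              ((if (ab.1:ℕ) ≤ (k:ℕ) then 1 else 0) - (if (ab.2:ℕ) ≤ (k:ℕ) then 1 else 0)))
            = ((∑ a : Fin (n+1), P a * (if (a:ℕ) ≤ (k:ℕ) then 1 else 0)) * (∑ b : Fin (n+1), N b)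
              - (∑ a : Fin (n+1), P a) * (∑ b : Fin (n+1), N b * (if (b:ℕ) ≤ (k:ℕ) then 1 else 0))) / V := by
          have exp1 : ((∑ a : Fin (n+1), P a * (if (a:ℕ) ≤ (k:ℕ) then 1 else 0)) * (∑ b : Fin (n+1), N b))
              = ∑ a : Fin (n+1), ∑ b : Fin (n+1), (P a * (if (a:ℕ) ≤ (k:ℕ) then 1 else 0)) * N b :=
            Fintype.sum_mul_sum _ _
          have exp2 : ((∑ a : Fin (n+1), P a) * (∑ b : Fin (n+1), N b * (if (b:ℕ) ≤ (k:ℕ) then 1 else 0)))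
              = ∑ a : Fin (n+1), ∑ b : Fin (n+1), P a * (N b * (if (b:ℕ) ≤ (k:ℕ) then 1 else 0)) :=
            Fintype.sum_mul_sum _ _
          rw [exp1, exp2, ← Finset.sum_sub_distrib, Finset.sum_div, Fintype.sum_prod_type]
          apply Finset.sum_congr rfl
          intro a _
          rw [← Finset.sum_sub_distrib, Finset.sum_div]
          apply Finset.sum_congr rfl
          intro b _
          ring
        rw [step2, hSP, hSN]
        field_simp
        try ring
      rw [hinl, hinr, add_zero]
      have step3 : (∑ a : Fin (n+1), P a * (if (a:ℕ) ≤ (k:ℕ) then 1 else 0))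
            - (∑ a : Fin (n+1), N a * (if (a:ℕ) ≤ (k:ℕ) then 1 else 0))
          = ∑ a : Fin (n+1), Dv n x (a:ℕ) * (if (a:ℕ) ≤ (k:ℕ) then 1 else 0) := by
        rw [← Finset.sum_sub_distrib]
        apply Finset.sum_congr rfl
        intro a _
        rw [hP, hN]
        simp only
        rw [← sub_mul, max_zero_sub_max_neg_zero_eq_self]
      rw [step3]
      have step4 : (∑ a : Fin (n+1), Dv n x (a:ℕ) * (if (a:ℕ) ≤ (k:ℕ) then 1 else 0))
          = ∑ j ∈ range ((k:ℕ)+1), Dv n x j := by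
        rw [Fin.sum_univ_eq_sum_range (fun j => Dv n x j * (if j ≤ (k:ℕ) then 1 else 0)) (n+1)]
        rw [show (∑ j ∈ range (n+1), Dv n x j * (if j ≤ (k:ℕ) then 1 else 0))
            = ∑ j ∈ range (n+1), (if j ≤ (k:ℕ) then Dv n x j else 0) from
          Finset.sum_congr rfl fun j _ => by split_ifs <;> ring]
        rw [← Finset.sum_filter]
        congr 1
        ext j
        simp only [Finset.mem_filter, Finset.mem_range]
        have := k.2
        omega
      rw [step4, Dv_sum]
      unfold Xe
      rw [dif_pos k.2]
    have hmem := Finset.centerMass_mem_convexHull (univ : Finset ((Fin (n+1) × Fin (n+1)) ⊕ Bool))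
      hw0 (by rw [hwsum]; norm_num) hzS
    rwa [Finset.centerMass_eq_of_sum_1 _ _ hwsum, hcomb] at hmem


noncomputable def coefP (m : ℕ) (s t : ℝ) : ℝ :=
  ∑ p ∈ Finset.range (m+1),
    (m.choose p : ℝ) * s^p * t^(m-p) / ((p.factorial : ℝ) * ((m-p).factorial : ℝ))


lemma USet_empty_left (m : ℕ) {s t : ℝ} (hs : s < 0) : USet m s t = ∅ := by
  ext u
  simp only [USet, Set.mem_setOf_eq, Set.mem_empty_iff_false, iff_false, not_and]
  intro h
  exact absurd (le_trans (Finset.sum_nonneg fun k _ => le_max_right _ _) h) (not_le.2 hs)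

lemma USet_empty_right (m : ℕ) {s t : ℝ} (ht : t < 0) : USet m s t = ∅ := by
  ext u
  simp only [USet, Set.mem_setOf_eq, Set.mem_empty_iff_false, iff_false, not_and]
  intro _ h
  exact absurd (le_trans (Finset.sum_nonneg fun k _ => le_max_right _ _) h) (not_le.2 ht)

lemma continuous_possum (m : ℕ) : Continuous (fun u : Fin m → ℝ => ∑ k, max (u k) 0) := by
  fun_prop

lemma continuous_negsum (m : ℕ) : Continuous (fun u : Fin m → ℝ => ∑ k, max (-u k) 0) := by
  fun_prop

lemma measurableSet_USet (m : ℕ) (s t : ℝ) : MeasurableSet (USet m s t) := by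
  have h1 : MeasurableSet {u : Fin m → ℝ | (∑ k, max (u k) 0) ≤ s} :=
    measurableSet_le (continuous_possum m).measurable measurable_const
  have h2 : MeasurableSet {u : Fin m → ℝ | (∑ k, max (-u k) 0) ≤ t} :=
    measurableSet_le (continuous_negsum m).measurable measurable_const
  exact h1.inter h2

lemma coefP_nonneg (m : ℕ) {s t : ℝ} (hs : 0 ≤ s) (ht : 0 ≤ t) : 0 ≤ coefP m s t := by
  refine Finset.sum_nonneg fun p _ => ?_
  positivity

lemma continuous_coefP (m : ℕ) : Continuous (fun z : ℝ × ℝ => coefP m z.1 z.2) := by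
  unfold coefP
  fun_prop

lemma piece1 (p m : ℕ) (s t : ℝ) :
    ∫ a in (0:ℝ)..s, (m.choose p : ℝ) * (s-a)^p * t^(m-p) / ((p.factorial : ℝ) * ((m-p).factorial : ℝ))
    = (m.choose p : ℝ) * s^(p+1) * t^(m-p) / (((p+1).factorial : ℝ) * ((m-p).factorial : ℝ)) := by
  have h1 : ∀ a : ℝ, (m.choose p : ℝ) * (s-a)^p * t^(m-p) / ((p.factorial : ℝ) * ((m-p).factorial : ℝ))
      = (s-a)^p * ((m.choose p : ℝ) * t^(m-p) / ((p.factorial : ℝ) * ((m-p).factorial : ℝ))) := by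
    intro a; ring
  simp only [h1]
  rw [intervalIntegral.integral_mul_const]
  have h2 : ∫ a in (0:ℝ)..s, (s-a)^p = ∫ x in (s-s)..(s-0), x^p :=
    intervalIntegral.integral_comp_sub_left (fun x => x ^ p) s
  rw [h2]
  simp only [sub_self, sub_zero]
  rw [integral_pow]
  have hfac : (((p+1).factorial : ℝ)) = ((p:ℝ)+1) * (p.factorial : ℝ) := by
    rw [Nat.factorial_succ]; push_cast; ring
  have hp1 : ((p:ℝ)+1) ≠ 0 := by positivity
  have hpf : (p.factorial : ℝ) ≠ 0 := by positivity
  have hmf : ((m-p).factorial : ℝ) ≠ 0 := by positivity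
  rw [hfac]
  field_simp
  ring

lemma piece2 (p m : ℕ) (s t : ℝ) :
    ∫ a in (-t)..(0:ℝ), (m.choose p : ℝ) * s^p * (t+a)^(m-p) / ((p.factorial : ℝ) * ((m-p).factorial : ℝ))
    = (m.choose p : ℝ) * s^p * t^(m-p+1) / ((p.factorial : ℝ) * (((m-p)+1).factorial : ℝ)) := by
  have h1 : ∀ a : ℝ, (m.choose p : ℝ) * s^p * (t+a)^(m-p) / ((p.factorial : ℝ) * ((m-p).factorial : ℝ))
      = (a+t)^(m-p) * ((m.choose p : ℝ) * s^p / ((p.factorial : ℝ) * ((m-p).factorial : ℝ))) := by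
    intro a; rw [add_comm a t]; ring
  simp only [h1]
  rw [intervalIntegral.integral_mul_const]
  have h2 : ∫ a in (-t)..(0:ℝ), (a+t)^(m-p) = ∫ x in (-t+t)..(0+t), x^(m-p) :=
    intervalIntegral.integral_comp_add_right (fun x => x ^ (m-p)) t
  rw [h2]
  simp only [neg_add_cancel, zero_add]
  rw [integral_pow]
  set e := m - p
  have hfac : (((e+1).factorial : ℝ)) = ((e:ℝ)+1) * (e.factorial : ℝ) := by
    rw [Nat.factorial_succ]; push_cast; ring
  have hp1 : ((e:ℝ)+1) ≠ 0 := by positivity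
  have hpf : (e.factorial : ℝ) ≠ 0 := by positivity
  have hmf : ((p).factorial : ℝ) ≠ 0 := by positivity
  rw [hfac]
  field_simp
  ring

lemma coefP_rec (m : ℕ) (s t : ℝ) :
    (∑ p ∈ range (m+1), (m.choose p : ℝ) * s^(p+1) * t^(m-p) / (((p+1).factorial : ℝ) * ((m-p).factorial : ℝ)))
    + (∑ p ∈ range (m+1), (m.choose p : ℝ) * s^p * t^(m-p+1) / ((p.factorial : ℝ) * (((m-p)+1).factorial : ℝ)))
    = coefP (m+1) s t := by
  -- second sum: rewrite as T2' over range (m+2), T2' p = C(m,p) s^p t^(m+1-p)/(p! (m+1-p)!)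
  have hsum2 : (∑ p ∈ range (m+1), (m.choose p : ℝ) * s^p * t^(m-p+1) / ((p.factorial : ℝ) * (((m-p)+1).factorial : ℝ)))
      = ∑ p ∈ range (m+2), (m.choose p : ℝ) * s^p * t^(m+1-p) / ((p.factorial : ℝ) * ((m+1-p).factorial : ℝ)) := by
    symm
    rw [Finset.sum_range_succ]
    have hlast : (m.choose (m+1) : ℝ) * s^(m+1) * t^(m+1-(m+1)) / (((m+1).factorial : ℝ) * ((m+1-(m+1)).factorial : ℝ)) = 0 := by
      rw [Nat.choose_succ_self]; simp
    rw [hlast, add_zero]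
    apply Finset.sum_congr rfl
    intro p hp
    rw [Finset.mem_range] at hp
    have h1 : m + 1 - p = m - p + 1 := by omega
    rw [h1]
  rw [hsum2]
  unfold coefP
  rw [Finset.sum_range_succ' (fun p => (m.choose p : ℝ) * s^p * t^(m+1-p) / ((p.factorial : ℝ) * ((m+1-p).factorial : ℝ)))]
  rw [Finset.sum_range_succ' (fun p => ((m+1).choose p : ℝ) * s^p * t^(m+1-p) / ((p.factorial : ℝ) * ((m+1-p).factorial : ℝ)))]
  have h0 : ((m+1).choose 0 : ℝ) * s^0 * t^(m+1-0) / (((0:ℕ).factorial : ℝ) * ((m+1-0).factorial : ℝ))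
      = (m.choose 0 : ℝ) * s^0 * t^(m+1-0) / (((0:ℕ).factorial : ℝ) * ((m+1-0).factorial : ℝ)) := by
    norm_num
  rw [h0, ← add_assoc, ← Finset.sum_add_distrib]
  congr 1
  apply Finset.sum_congr rfl
  intro p hp
  have hms : m + 1 - (p+1) = m - p := by omega
  have hch : (((m+1).choose (p+1) : ℝ)) = (m.choose p : ℝ) + (m.choose (p+1) : ℝ) := by
    rw [Nat.choose_succ_succ]; push_cast; ring
  rw [hms, hch]
  ring

lemma volume_USet (m : ℕ) : ∀ s t : ℝ, 0 ≤ s → 0 ≤ t →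
    volume (USet m s t) = ENNReal.ofReal (coefP m s t) := by
  induction m with
  | zero =>
    intro s t hs ht
    have h1 : USet 0 s t = Set.univ := by
      ext u
      simp [USet, hs, ht]
    rw [h1]
    have h2 : coefP 0 s t = 1 := by simp [coefP]
    rw [h2]
    rw [show (volume : Measure (Fin 0 → ℝ)) = Measure.pi (fun _ => volume) from rfl, Measure.pi_univ]
    simp
  | succ m ih =>
    intro s t hs ht
    have hmp := volume_preserving_piFinSuccAbove (fun _ : Fin (m+1) => ℝ) 0
    set A : Set (ℝ × (Fin m → ℝ)) :=
      {z | max z.1 0 + ∑ k, max (z.2 k) 0 ≤ s ∧ max (-z.1) 0 + ∑ k, max (-(z.2 k)) 0 ≤ t} with hAdef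
    have hA : MeasurableSet A := by
      have c1 : Continuous (fun z : ℝ × (Fin m → ℝ) => max z.1 0 + ∑ k, max (z.2 k) 0) := by fun_prop
      have c2 : Continuous (fun z : ℝ × (Fin m → ℝ) => max (-z.1) 0 + ∑ k, max (-(z.2 k)) 0) := by fun_prop
      exact (measurableSet_le c1.measurable measurable_const).inter
        (measurableSet_le c2.measurable measurable_const)
    have hpre : USet (m+1) s t = (MeasurableEquiv.piFinSuccAbove (fun _ : Fin (m+1) => ℝ) 0) ⁻¹' A := by
      ext u
      simp only [USet, Set.mem_setOf_eq, Set.mem_preimage, MeasurableEquiv.piFinSuccAbove,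
        MeasurableEquiv.coe_mk, hAdef]
      rw [Fin.sum_univ_succ (f := fun k => max (u k) 0), Fin.sum_univ_succ (f := fun k => max (-u k) 0)]
      simp [Fin.insertNthEquiv, Fin.succAbove, Fin.tail]
    rw [hpre, hmp.measure_preimage hA.nullMeasurableSet]
    rw [show (volume : Measure (ℝ × (Fin m → ℝ))) = (volume : Measure ℝ).prod volume from rfl]
    rw [Measure.prod_apply hA]
    have hslice : ∀ a : ℝ, (Prod.mk a ⁻¹' A) = USet m (s - max a 0) (t - max (-a) 0) := by
      intro a
      ext v
      simp only [Set.mem_preimage, Set.mem_setOf_eq, hAdef, USet]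
      constructor
      · rintro ⟨h1, h2⟩; constructor <;> linarith
      · rintro ⟨h1, h2⟩; constructor <;> linarith
    simp only [hslice]
    have hind : (fun a => volume (USet m (s - max a 0) (t - max (-a) 0)))
        = Set.indicator (Set.Icc (-t) s) (fun a => ENNReal.ofReal (coefP m (s - max a 0) (t - max (-a) 0))) := by
      funext a
      by_cases ha : a ∈ Set.Icc (-t) s
      · rw [Set.indicator_of_mem ha]
        obtain ⟨ha1, ha2⟩ := ha
        have h1 : (0:ℝ) ≤ s - max a 0 := by
          rcases le_total a 0 with h | h
          · rw [max_eq_right h]; linarith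
          · rw [max_eq_left h]; linarith
        have h2 : (0:ℝ) ≤ t - max (-a) 0 := by
          rcases le_total a 0 with h | h
          · rw [max_eq_left (by linarith : (0:ℝ) ≤ -a)]; linarith
          · rw [max_eq_right (by linarith : -a ≤ (0:ℝ))]; linarith
        exact ih _ _ h1 h2
      · rw [Set.indicator_of_notMem ha]
        rw [Set.mem_Icc, not_and_or] at ha
        rcases ha with ha | ha
        · push_neg at ha
          rw [USet_empty_right]
          · simp
          · have : max (-a) 0 = -a := max_eq_left (by linarith)
            rw [this]; linarith
        · push_neg at ha
          rw [USet_empty_left]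
          · simp
          · have : max a 0 = a := max_eq_left (by linarith)
            rw [this]; linarith
    rw [hind, lintegral_indicator measurableSet_Icc]
    have hts : -t ≤ s := by linarith
    set q : ℝ → ℝ := fun a => coefP m (s - max a 0) (t - max (-a) 0) with hq
    have hqc : Continuous q := by
      have : Continuous (fun a : ℝ => (s - max a 0, t - max (-a) 0)) := by fun_prop
      exact (continuous_coefP m).comp this
    have hint : IntegrableOn q (Set.Icc (-t) s) := hqc.integrableOn_Icc
    have hnn : 0 ≤ᵐ[volume.restrict (Set.Icc (-t) s)] q := by
      refine (ae_restrict_iff' measurableSet_Icc).2 (ae_of_all _ ?_)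
      intro a ha
      obtain ⟨ha1, ha2⟩ := ha
      have h1 : (0:ℝ) ≤ s - max a 0 := by
        rcases le_total a 0 with h | h
        · rw [max_eq_right h]; linarith
        · rw [max_eq_left h]; linarith
      have h2 : (0:ℝ) ≤ t - max (-a) 0 := by
        rcases le_total a 0 with h | h
        · rw [max_eq_left (by linarith : (0:ℝ) ≤ -a)]; linarith
        · rw [max_eq_right (by linarith : -a ≤ (0:ℝ))]; linarith
      exact coefP_nonneg m h1 h2
    rw [← ofReal_integral_eq_lintegral_ofReal hint hnn]
    congr 1
    rw [integral_Icc_eq_integral_Ioc, ← intervalIntegral.integral_of_le hts]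
    have hi1 : IntervalIntegrable q volume (-t) 0 := hqc.intervalIntegrable _ _
    have hi2 : IntervalIntegrable q volume 0 s := hqc.intervalIntegrable _ _
    rw [← intervalIntegral.integral_add_adjacent_intervals hi1 hi2]
    have hpA : ∫ a in (-t)..(0:ℝ), q a
        = ∑ p ∈ range (m+1), (m.choose p : ℝ) * s^p * t^(m-p+1) / ((p.factorial : ℝ) * (((m-p)+1).factorial : ℝ)) := by
      have hcongr : ∫ a in (-t)..(0:ℝ), q a
          = ∫ a in (-t)..(0:ℝ), ∑ p ∈ range (m+1),
              (m.choose p : ℝ) * s^p * (t+a)^(m-p) / ((p.factorial : ℝ) * ((m-p).factorial : ℝ)) := by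
        apply intervalIntegral.integral_congr
        intro a ha
        rw [Set.uIcc_of_le (by linarith : -t ≤ (0:ℝ))] at ha
        obtain ⟨ha1, ha2⟩ := ha
        have e1 : max a 0 = 0 := max_eq_right ha2
        have e2 : max (-a) 0 = -a := max_eq_left (by linarith)
        simp only [hq, e1, e2, sub_zero, sub_neg_eq_add]
        rfl
      rw [hcongr, intervalIntegral.integral_finset_sum]
      · exact Finset.sum_congr rfl fun p _ => piece2 p m s t
      · intro p _
        apply Continuous.intervalIntegrable
        fun_prop
    have hpB : ∫ a in (0:ℝ)..s, q a
        = ∑ p ∈ range (m+1), (m.choose p : ℝ) * s^(p+1) * t^(m-p) / (((p+1).factorial : ℝ) * ((m-p).factorial : ℝ)) := by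
      have hcongr : ∫ a in (0:ℝ)..s, q a
          = ∫ a in (0:ℝ)..s, ∑ p ∈ range (m+1),
              (m.choose p : ℝ) * (s-a)^p * t^(m-p) / ((p.factorial : ℝ) * ((m-p).factorial : ℝ)) := by
        apply intervalIntegral.integral_congr
        intro a ha
        rw [Set.uIcc_of_le hs] at ha
        obtain ⟨ha1, ha2⟩ := ha
        have e1 : max a 0 = a := max_eq_left ha1
        have e2 : max (-a) 0 = 0 := max_eq_right (by linarith)
        simp only [hq, e1, e2, sub_zero]
        rfl
      rw [hcongr, intervalIntegral.integral_finset_sum]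
      · exact Finset.sum_congr rfl fun p _ => piece1 p m s t
      · intro p _
        apply Continuous.intervalIntegrable
        fun_prop
    rw [hpA, hpB, add_comm]
    exact coefP_rec m s t

lemma choose_sq_sum (n : ℕ) : ∑ p ∈ range (n+1), n.choose p * n.choose p = (2*n).choose n := by
  rw [two_mul, Nat.add_choose_eq]
  rw [Finset.Nat.sum_antidiagonal_eq_sum_range_succ_mk]
  apply Finset.sum_congr rfl
  intro p hp
  rw [Finset.mem_range] at hp
  rw [Nat.choose_symm (by omega)]

lemma coefP_one_one (n : ℕ) : (n.factorial : ℝ) * coefP n 1 1 = ((2*n).choose n : ℝ) := by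
  unfold coefP
  rw [Finset.mul_sum]
  have : ∀ p ∈ range (n+1), (n.factorial : ℝ) * ((n.choose p : ℝ) * 1^p * 1^(n-p) / ((p.factorial : ℝ) * ((n-p).factorial : ℝ)))
      = (n.choose p : ℝ) * (n.choose p : ℝ) := by
    intro p hp
    rw [Finset.mem_range] at hp
    have hpn : p ≤ n := by omega
    have hcast : (n.choose p : ℝ) = (n.factorial : ℝ) / ((p.factorial : ℝ) * ((n-p).factorial : ℝ)) :=
      Nat.cast_choose ℝ hpn
    rw [one_pow, one_pow, mul_one]
    rw [hcast]
    have h1 : (p.factorial : ℝ) ≠ 0 := by positivity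
    have h2 : ((n-p).factorial : ℝ) ≠ 0 := by positivity
    field_simp
  rw [Finset.sum_congr rfl this]
  rw [show (∑ p ∈ range (n+1), (n.choose p : ℝ) * (n.choose p : ℝ))
      = ((∑ p ∈ range (n+1), n.choose p * n.choose p : ℕ) : ℝ) by push_cast; rfl]
  rw [choose_sq_sum]


/-- For `n ≥ 1`, the convex hull of all roots `±(e_i + ⋯ + e_j)` of type `Aₙ` has
normalized (integral, i.e. `n! ×` Euclidean) volume `C(2n, n)`. -/
theorem volume_root_polytope_An (n : ℕ) (hn : 1 ≤ n) :
    (n.factorial : ENNReal) * volume (convexHull ℝ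
        {v : Fin n → ℝ | ∃ i j : Fin n, i ≤ j ∧
          (v = intervalRoot n i j ∨ v = -intervalRoot n i j)})
      = ((2 * n).choose n : ENNReal) := by
  have hull_eq : convexHull ℝ {v : Fin n → ℝ | ∃ i j : Fin n, i ≤ j ∧
      (v = intervalRoot n i j ∨ v = -intervalRoot n i j)} = Tmap n ⁻¹' USet n 1 1 :=
    le_antisymm (hull_subset n) (region_subset n hn)
  rw [hull_eq]
  have hdet : LinearMap.det (Tmap n) ≠ 0 := by rw [Tmap_det]; norm_num
  rw [MeasureTheory.Measure.addHaar_preimage_linearMap volume hdet]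
  rw [Tmap_det]
  rw [volume_USet n 1 1 (by norm_num) (by norm_num)]
  simp only [inv_one, abs_one, ENNReal.ofReal_one, one_mul]
  rw [show ((n.factorial : ℕ) : ENNReal) = ENNReal.ofReal ((n.factorial : ℕ) : ℝ) from
    (ENNReal.ofReal_natCast _).symm]
  rw [← ENNReal.ofReal_mul (by positivity)]
  rw [coefP_one_one]
  exact ENNReal.ofReal_natCast _
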